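/- Every commutative regular expression is provably equal (with respect to ≡) to a semilinear expression, i.e. a finite union of linear expressions. -/

import Mathlib

namespace CKAnote

/-- Commutative regular expressions over an alphabet `α`. -/
inductive CRE (α : Type) where
  | zero : CRE α
  | one : CRE α
  | letter : α → CRE α
  | mul : CRE α → CRE α → CRE α
  | union : CRE α → CRE α → CRE α
  | star : CRE α → CRE α

variable {α : Type} [Fintype α] [DecidableEq α]

/-- Semantics of a commutative regular expression as a set of Parikh vectors. -/
def sem : CRE α → Set (α → ℕ)
  | .zero => ∅
  | .one => {0}
  | .letter a => {Pi.single a 1}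
  | .mul e f => {w | ∃ u ∈ sem e, ∃ v ∈ sem f, w = u + v}
  | .union e f => sem e ∪ sem f
  | .star e => ↑(AddSubmonoid.closure (sem e))

/-- Provable equality: the smallest congruence containing the axioms of
commutative Kleene algebra (where `e ≤ f` abbreviates `e ∪ f ≡ f`). -/
inductive CKA : CRE α → CRE α → Prop
  | refl (e : CRE α) : CKA e e
  | symm {e f : CRE α} : CKA e f → CKA f e
  | trans {e f g : CRE α} : CKA e f → CKA f g → CKA e g
  | mul_congr {e e' f f' : CRE α} : CKA e e' → CKA f f' → CKA (e.mul f) (e'.mul f')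
  | union_congr {e e' f f' : CRE α} : CKA e e' → CKA f f' → CKA (e.union f) (e'.union f')
  | star_congr {e e' : CRE α} : CKA e e' → CKA e.star e'.star
  | mul_assoc (e f g : CRE α) : CKA (e.mul (f.mul g)) ((e.mul f).mul g)
  | mul_comm (e f : CRE α) : CKA (e.mul f) (f.mul e)
  | one_mul (e : CRE α) : CKA (CRE.one.mul e) e
  | union_assoc (e f g : CRE α) : CKA (e.union (f.union g)) ((e.union f).union g)
  | union_comm (e f : CRE α) : CKA (e.union f) (f.union e)
  | union_idem (e : CRE α) : CKA (e.union e) e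
  | zero_union (e : CRE α) : CKA (CRE.zero.union e) e
  | zero_mul (e : CRE α) : CKA (CRE.zero.mul e) CRE.zero
  | left_distrib (e f g : CRE α) : CKA (e.mul (f.union g)) ((e.mul f).union (e.mul g))
  | star_unfold (e : CRE α) : CKA ((CRE.one.union (e.mul e.star)).union e.star) e.star
  | star_lfp {e f : CRE α} : CKA ((e.mul f).union f) f → CKA ((e.star.mul f).union f) f

/-- `e ≤ f`, i.e. `e ∪ f ≡ f`. -/
def leq (e f : CRE α) : Prop := CKA (e.union f) f

/-- `e^n`, the `n`-fold product of `e` with itself. -/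
def pow (e : CRE α) : ℕ → CRE α
  | 0 => CRE.one
  | n + 1 => e.mul (pow e n)

/-- `e^{<n}`, i.e. `(e ∪ 1)^(n-1)` for `n > 0` and `0` for `n = 0`. -/
def ltPow (e : CRE α) : ℕ → CRE α
  | 0 => CRE.zero
  | n + 1 => pow (e.union CRE.one) n

/-- Finite union of a list of expressions. -/
def unionList : List (CRE α) → CRE α
  | [] => CRE.zero
  | e :: l => e.union (unionList l)

/-- Finite product of a list of expressions. -/
def prodList : List (CRE α) → CRE α
  | [] => CRE.one
  | e :: l => e.mul (prodList l)

/-- `expr(u)`: the product over `a ∈ α` of `u a` copies of the letter `a`. -/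
noncomputable def exprVec (u : α → ℕ) : CRE α :=
  prodList ((Finset.univ : Finset α).toList.map (fun a => pow (CRE.letter a) (u a)))

/-- The union `⋃_{b ∈ B} expr(b)` for a finite set of Parikh vectors `B`. -/
noncomputable def unionVecs (B : Finset (α → ℕ)) : CRE α :=
  unionList (B.toList.map exprVec)

/-- The linear expression `expr(u) · (⋃_{b ∈ B} expr(b))*`. -/
noncomputable def linExpr (u : α → ℕ) (B : Finset (α → ℕ)) : CRE α :=
  (exprVec u).mul (unionVecs B).star

/-- A finite set of Parikh vectors is independent when every Parikh vector
admits at most one representation as an `ℕ`-linear combination of its elements. -/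
def Independent (B : Finset (α → ℕ)) : Prop :=
  ∀ c d : (α → ℕ) → ℕ, (∑ b ∈ B, c b • b) = (∑ b ∈ B, d b • b) → ∀ b ∈ B, c b = d b

/-- The semilinear expression associated to a list of linear data:
the finite union of the corresponding linear expressions. -/
noncomputable def semiLin (L : List ((α → ℕ) × Finset (α → ℕ))) : CRE α :=
  unionList (L.map (fun p => linExpr p.1 p.2))

/-- The dimension of a semilinear expression: the maximum of the dimensions
of its linear components. -/
def dimSL (L : List ((α → ℕ) × Finset (α → ℕ))) : ℕ :=
  (L.map (fun p => p.2.card)).foldr max 0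

/-- Finitary (star-free) expressions. -/
def NoStar : CRE α → Prop
  | .zero => True
  | .one => True
  | .letter _ => True
  | .mul e f => NoStar e ∧ NoStar f
  | .union e f => NoStar e ∧ NoStar f
  | .star _ => False

/-- Coordinatewise embedding of `ℕ^α` into `ℚ^α`. -/
def toQ (v : α → ℕ) : α → ℚ := fun a => (v a : ℚ)

set_option linter.unusedSectionVars false

-- ===== auxiliary lemmas =====

theorem ck_mul_one (e : CRE α) : CKA (e.mul .one) e := .trans (.mul_comm _ _) (.one_mul e)
theorem ck_union_zero (e : CRE α) : CKA (e.union .zero) e := .trans (.union_comm _ _) (.zero_union e)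
theorem ck_mul_zero (e : CRE α) : CKA (e.mul .zero) .zero := .trans (.mul_comm _ _) (.zero_mul e)
theorem ck_rdistrib (e f g : CRE α) : CKA ((e.union f).mul g) ((e.mul g).union (f.mul g)) :=
  .trans (.mul_comm _ _) (.trans (.left_distrib g e f) (.union_congr (.mul_comm _ _) (.mul_comm _ _)))
theorem mul_left_comm (e f g : CRE α) : CKA (e.mul (f.mul g)) (f.mul (e.mul g)) :=
  ((CKA.mul_assoc e f g).trans (.mul_congr (.mul_comm e f) (.refl g))).trans (CKA.mul_assoc f e g).symm
theorem mul_mul_mul_comm (a x b y : CRE α) :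
    CKA ((a.mul x).mul (b.mul y)) ((a.mul b).mul (x.mul y)) :=
  ((CKA.mul_assoc a x (b.mul y)).symm.trans
    (.mul_congr (.refl a) (mul_left_comm x b y))).trans (CKA.mul_assoc a b (x.mul y))

theorem leq_refl (e : CRE α) : leq e e := .union_idem e
theorem leq_congr {e e' f f' : CRE α} (he : CKA e e') (hf : CKA f f') (h : leq e f) : leq e' f' :=
  .trans (.union_congr he.symm hf.symm) (.trans h hf)
theorem leq_of_cka {e f : CRE α} (h : CKA e f) : leq e f :=
  .trans (.union_congr h (.refl f)) (.union_idem f)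
theorem leq_trans {e f g : CRE α} (h1 : leq e f) (h2 : leq f g) : leq e g :=
  .trans (.union_congr (.refl e) h2.symm)
    (.trans (.union_assoc _ _ _) (.trans (.union_congr h1 (.refl g)) h2))
theorem cka_of_leq {e f : CRE α} (h1 : leq e f) (h2 : leq f e) : CKA e f :=
  .trans h2.symm (.trans (.union_comm _ _) h1)
theorem le_union_left (e f : CRE α) : leq e (e.union f) :=
  CKA.trans (.union_assoc _ _ _) (.union_congr (.union_idem e) (.refl f))
theorem le_union_right (e f : CRE α) : leq f (e.union f) :=
  leq_congr (.refl f) (.union_comm f e) (le_union_left f e)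
theorem union_leq {e f g : CRE α} (h1 : leq e g) (h2 : leq f g) : leq (e.union f) g :=
  CKA.trans (CKA.union_assoc e f g).symm (.trans (.union_congr (.refl e) h2) h1)
theorem zero_leq (e : CRE α) : leq .zero e := .zero_union e
theorem mul_le_left {e e' f : CRE α} (h : leq e e') : leq (e.mul f) (e'.mul f) :=
  .trans (ck_rdistrib e e' f).symm (.mul_congr h (.refl f))
theorem mul_le_right {e f f' : CRE α} (h : leq f f') : leq (e.mul f) (e.mul f') :=
  CKA.trans (CKA.left_distrib e f f').symm (.mul_congr (.refl e) h)
theorem mul_le_mul {e e' f f' : CRE α} (h1 : leq e e') (h2 : leq f f') :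
    leq (e.mul f) (e'.mul f') := leq_trans (mul_le_left h1) (mul_le_right h2)

theorem one_le_star (e : CRE α) : leq .one e.star :=
  leq_trans (le_union_left _ _) (leq_trans (le_union_left _ _) (leq_of_cka (.star_unfold e)))
theorem mul_star_le (e : CRE α) : leq (e.mul e.star) e.star :=
  leq_trans (le_union_right _ _) (leq_trans (le_union_left _ _) (leq_of_cka (.star_unfold e)))
theorem le_mul_of_one_le {f : CRE α} (e : CRE α) (h : leq .one f) : leq e (e.mul f) :=
  leq_congr (ck_mul_one e) (.refl _) (mul_le_right h)
theorem le_star (e : CRE α) : leq e e.star :=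
  leq_trans (le_mul_of_one_le e (one_le_star e)) (mul_star_le e)
theorem star_le {e f : CRE α} (h : leq (e.mul f) f) : leq (e.star.mul f) f := .star_lfp h
theorem star_mono {e f : CRE α} (h : leq e f) : leq e.star f.star :=
  leq_trans (le_mul_of_one_le e.star (one_le_star f))
    (star_le (leq_trans (mul_le_left h) (mul_star_le f)))
theorem star_sq_le (e : CRE α) : leq (e.star.mul e.star) e.star := star_le (mul_star_le e)
theorem one_le_mul_star (e f : CRE α) : leq .one (e.star.mul f.star) :=
  leq_congr (CKA.one_mul .one) (.refl _) (mul_le_mul (one_le_star e) (one_le_star f))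

theorem star_union (e f : CRE α) : CKA ((e.union f).star) (e.star.mul f.star) := by
  have he : leq (e.mul (e.star.mul f.star)) (e.star.mul f.star) :=
    leq_congr (CKA.mul_assoc e e.star f.star).symm (.refl _) (mul_le_left (mul_star_le e))
  have hf : leq (f.mul (e.star.mul f.star)) (e.star.mul f.star) :=
    leq_congr (mul_left_comm f e.star f.star).symm (.refl _) (mul_le_right (mul_star_le f))
  have hstep : leq ((e.union f).mul (e.star.mul f.star)) (e.star.mul f.star) :=
    leq_congr (ck_rdistrib e f _).symm (.refl _) (union_leq he hf)
  refine cka_of_leq ?_ ?_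
  · exact leq_trans (le_mul_of_one_le _ (one_le_mul_star e f)) (star_le hstep)
  · exact leq_trans
      (mul_le_mul (star_mono (le_union_left e f)) (star_mono (le_union_right e f)))
      (star_sq_le _)

theorem star_zero : CKA ((CRE.zero : CRE α).star) .one := by
  have h : leq ((CRE.zero : CRE α).mul .one) .one :=
    leq_congr (CKA.zero_mul .one).symm (.refl _) (zero_leq _)
  exact cka_of_leq (leq_congr (ck_mul_one _) (.refl _) (star_le h)) (one_le_star _)

theorem star_lin (a b : CRE α) :
    CKA ((a.mul b.star).star) (CRE.one.union (a.mul ((a.union b).star))) := by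
  set s := (a.union b).star with hs
  have has : leq (a.mul s) (s.mul s) := mul_le_left (leq_trans (le_union_left a b) (le_star _))
  have hbs : leq b.star s := star_mono (le_union_right a b)
  -- forward direction
  have t1 : leq ((a.mul b.star).mul .one) (CRE.one.union (a.mul s)) :=
    leq_congr (ck_mul_one _).symm (.refl _)
      (leq_trans (mul_le_right hbs) (le_union_right _ _))
  have inner : leq (b.star.mul (a.mul s)) s :=
    leq_trans (mul_le_mul hbs has) (leq_trans (mul_le_right (star_sq_le _)) (star_sq_le _))
  have t2 : leq ((a.mul b.star).mul (a.mul s)) (CRE.one.union (a.mul s)) :=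
    leq_trans
      (leq_congr (CKA.mul_assoc a b.star (a.mul s)) (.refl _) (mul_le_right inner))
      (le_union_right _ _)
  have hstep : leq ((a.mul b.star).mul (CRE.one.union (a.mul s))) (CRE.one.union (a.mul s)) :=
    leq_congr (CKA.left_distrib _ _ _).symm (.refl _) (union_leq t1 t2)
  -- backward direction
  have hag : leq (a.mul (a.mul b.star).star) (a.mul b.star).star :=
    leq_trans (mul_le_left (le_mul_of_one_le a (one_le_star b))) (mul_star_le _)
  have hF : leq (a.mul ((a.mul b.star).mul (a.mul b.star).star))
      ((a.mul b.star).mul (a.mul b.star).star) :=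
    leq_congr (mul_left_comm a (a.mul b.star) (a.mul b.star).star).symm (.refl _)
      (mul_le_right hag)
  have hstarF := star_le hF
  have hb2 : leq (a.mul (a.star.mul b.star)) (a.mul b.star).star := by
    refine leq_trans (leq_congr (mul_left_comm a a.star b.star).symm (.refl _)
      (mul_le_right (le_mul_of_one_le (a.mul b.star) (one_le_star (a.mul b.star))))) ?_
    exact leq_trans hstarF (mul_star_le _)
  have hback : leq (CRE.one.union (a.mul s)) (a.mul b.star).star := by
    refine union_leq (one_le_star _) ?_
    exact leq_congr (CKA.mul_congr (.refl a) (star_union a b).symm) (.refl _) hb2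
  refine cka_of_leq ?_ hback
  exact leq_trans (le_mul_of_one_le _ (le_union_left _ _)) (star_le hstep)


-- ===== list lemmas =====
theorem prodList_congr {β : Type} (l : List β) (f g : β → CRE α)
    (h : ∀ b ∈ l, CKA (f b) (g b)) :
    CKA (prodList (l.map f)) (prodList (l.map g)) := by
  induction l with
  | nil => exact .refl _
  | cons b l ih =>
      exact .mul_congr (h b List.mem_cons_self)
        (ih fun c hc => h c (List.mem_cons_of_mem _ hc))

theorem prodList_one {β : Type} (l : List β) (f : β → CRE α)
    (h : ∀ b ∈ l, CKA (f b) .one) : CKA (prodList (l.map f)) .one := by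
  induction l with
  | nil => exact .refl _
  | cons b l ih =>
      exact .trans (.mul_congr (h b List.mem_cons_self)
        (ih fun c hc => h c (List.mem_cons_of_mem _ hc))) (.one_mul _)

theorem prodList_map_mul {β : Type} (l : List β) (f g : β → CRE α) :
    CKA (prodList (l.map fun b => (f b).mul (g b)))
      ((prodList (l.map f)).mul (prodList (l.map g))) := by
  induction l with
  | nil => exact (CKA.one_mul _).symm
  | cons b l ih =>
      exact .trans (.mul_congr (.refl _) ih) (mul_mul_mul_comm _ _ _ _)

theorem prodList_single {β : Type} (l : List β) (hl : l.Nodup) (f : β → CRE α)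
    (a : β) (ha : a ∈ l) (hf : ∀ b ∈ l, b ≠ a → CKA (f b) .one) :
    CKA (prodList (l.map f)) (f a) := by
  induction l with
  | nil => cases ha
  | cons b l ih =>
      rcases List.mem_cons.mp ha with h | h
      · subst h
        have hone : CKA (prodList (l.map f)) .one :=
          prodList_one l f fun c hc =>
            hf c (List.mem_cons_of_mem _ hc) (fun e => (List.nodup_cons.mp hl).1 (e ▸ hc))
        exact (CKA.mul_congr (.refl _) hone).trans (ck_mul_one _)
      · have hba : b ≠ a := fun e => (List.nodup_cons.mp hl).1 (e ▸ h)
        exact (CKA.mul_congr (hf b List.mem_cons_self hba)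
          (ih (List.nodup_cons.mp hl).2 h
            (fun c hc => hf c (List.mem_cons_of_mem _ hc)))).trans (.one_mul _)

theorem pow_add (e : CRE α) (m n : ℕ) :
    CKA (pow e (m + n)) ((pow e m).mul (pow e n)) := by
  induction m with
  | zero => rw [Nat.zero_add]; exact (CKA.one_mul _).symm
  | succ m ih =>
      have h : m + 1 + n = (m + n) + 1 := by omega
      rw [h]
      exact (CKA.mul_congr (.refl e) ih).trans (CKA.mul_assoc e (pow e m) (pow e n))

theorem unionList_append (l1 l2 : List (CRE α)) :
    CKA (unionList (l1 ++ l2)) ((unionList l1).union (unionList l2)) := by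
  induction l1 with
  | nil => exact (CKA.zero_union _).symm
  | cons e l ih =>
      exact (CKA.union_congr (.refl e) ih).trans (CKA.union_assoc _ _ _)

theorem le_unionList {l : List (CRE α)} {e : CRE α} (h : e ∈ l) : leq e (unionList l) := by
  induction l with
  | nil => cases h
  | cons f l ih =>
      rcases List.mem_cons.mp h with h | h
      · exact h ▸ le_union_left _ _
      · exact leq_trans (ih h) (le_union_right _ _)

theorem unionList_le {l : List (CRE α)} {f : CRE α} (h : ∀ e ∈ l, leq e f) :
    leq (unionList l) f := by
  induction l with
  | nil => exact zero_leq f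
  | cons e l ih =>
      exact union_leq (h e List.mem_cons_self)
        (ih fun c hc => h c (List.mem_cons_of_mem _ hc))

-- ===== exprVec lemmas =====
theorem exprVec_zero : CKA (exprVec (0 : α → ℕ)) .one :=
  prodList_one _ _ (fun _ _ => .refl _)

theorem exprVec_add (u v : α → ℕ) :
    CKA (exprVec (u + v)) ((exprVec u).mul (exprVec v)) :=
  (prodList_congr _ _ _ (fun a _ => pow_add (CRE.letter a) (u a) (v a))).trans
    (prodList_map_mul _ _ _)

theorem exprVec_single (a : α) : CKA (exprVec (Pi.single a 1)) (.letter a) := by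
  have h := prodList_single (Finset.univ : Finset α).toList (Finset.nodup_toList _)
    (fun b => pow (CRE.letter b) ((Pi.single a 1 : α → ℕ) b)) a
    (Finset.mem_toList.mpr (Finset.mem_univ a))
    (fun b _ hb => by simp only [Pi.single_eq_of_ne hb]; exact .refl _)
  refine h.trans ?_
  simp only [Pi.single_eq_same]
  exact ck_mul_one _

-- ===== unionVecs lemmas =====
theorem le_unionVecs {b : α → ℕ} {B : Finset (α → ℕ)} (h : b ∈ B) :
    leq (exprVec b) (unionVecs B) :=
  le_unionList (List.mem_map_of_mem (Finset.mem_toList.mpr h))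

theorem unionVecs_le {B : Finset (α → ℕ)} {f : CRE α}
    (h : ∀ b ∈ B, leq (exprVec b) f) : leq (unionVecs B) f :=
  unionList_le (by
    intro x hx
    rcases List.mem_map.mp hx with ⟨b, hb, rfl⟩
    exact h b (Finset.mem_toList.mp hb))

theorem unionVecs_union (B C : Finset (α → ℕ)) :
    CKA (unionVecs (B ∪ C)) ((unionVecs B).union (unionVecs C)) := by
  refine cka_of_leq (unionVecs_le fun b hb => ?_) (union_leq
    (unionVecs_le fun b hb => le_unionVecs (Finset.mem_union_left _ hb))
    (unionVecs_le fun b hb => le_unionVecs (Finset.mem_union_right _ hb)))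
  rcases Finset.mem_union.mp hb with h | h
  · exact leq_trans (le_unionVecs h) (le_union_left _ _)
  · exact leq_trans (le_unionVecs h) (le_union_right _ _)

theorem unionVecs_insert (u : α → ℕ) (B : Finset (α → ℕ)) :
    CKA (unionVecs (insert u B)) ((exprVec u).union (unionVecs B)) := by
  refine cka_of_leq (unionVecs_le fun b hb => ?_) (union_leq
    (le_unionVecs (Finset.mem_insert_self u B))
    (unionVecs_le fun b hb => le_unionVecs (Finset.mem_insert_of_mem hb)))
  rcases Finset.mem_insert.mp hb with h | h
  · exact h ▸ le_union_left _ _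
  · exact leq_trans (le_unionVecs h) (le_union_right _ _)

theorem unionVecs_empty : CKA (unionVecs (∅ : Finset (α → ℕ))) .zero := by
  rw [unionVecs, Finset.toList_empty]
  exact .refl _

-- ===== linExpr / semiLin lemmas =====
theorem linExpr_one : CKA (linExpr (0 : α → ℕ) ∅) .one :=
  (CKA.mul_congr exprVec_zero
    (((CKA.star_congr unionVecs_empty).trans star_zero))).trans (.one_mul _)

theorem linExpr_mul (u : α → ℕ) (B : Finset (α → ℕ)) (v : α → ℕ) (C : Finset (α → ℕ)) :
    CKA ((linExpr u B).mul (linExpr v C)) (linExpr (u + v) (B ∪ C)) :=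
  (mul_mul_mul_comm _ _ _ _).trans
    (CKA.mul_congr (exprVec_add u v).symm
      ((star_union (unionVecs B) (unionVecs C)).symm.trans
        (CKA.star_congr (unionVecs_union B C).symm)))

theorem semiLin_append (L1 L2 : List ((α → ℕ) × Finset (α → ℕ))) :
    CKA (semiLin (L1 ++ L2)) ((semiLin L1).union (semiLin L2)) := by
  simp only [semiLin, List.map_append]
  exact unionList_append _ _

theorem lin_mul_semiLin (p : (α → ℕ) × Finset (α → ℕ)) (L : List ((α → ℕ) × Finset (α → ℕ))) :
    CKA ((linExpr p.1 p.2).mul (semiLin L))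
      (semiLin (L.map fun q => (p.1 + q.1, p.2 ∪ q.2))) := by
  induction L with
  | nil => exact ck_mul_zero _
  | cons q L ih =>
      exact (CKA.left_distrib _ _ _).trans (.union_congr (linExpr_mul _ _ _ _) ih)

theorem mul_semiLin (L1 L2 : List ((α → ℕ) × Finset (α → ℕ))) :
    ∃ L, CKA ((semiLin L1).mul (semiLin L2)) (semiLin L) := by
  induction L1 with
  | nil => exact ⟨[], CKA.zero_mul _⟩
  | cons p L1 ih =>
      obtain ⟨L, hL⟩ := ih
      refine ⟨(L2.map fun q => (p.1 + q.1, p.2 ∪ q.2)) ++ L, ?_⟩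
      exact (ck_rdistrib _ _ _).trans
        ((CKA.union_congr (lin_mul_semiLin p L2) hL).trans (semiLin_append _ _).symm)

theorem cka_one_semiLin : CKA (.one : CRE α) (semiLin [((0 : α → ℕ), (∅ : Finset (α → ℕ)))]) :=
  ((ck_union_zero _).trans linExpr_one).symm

theorem star_semiLin (L : List ((α → ℕ) × Finset (α → ℕ))) :
    ∃ L', CKA ((semiLin L).star) (semiLin L') := by
  induction L with
  | nil =>
      exact ⟨[((0 : α → ℕ), (∅ : Finset (α → ℕ)))], star_zero.trans cka_one_semiLin⟩
  | cons p L ih =>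
      obtain ⟨L', hL'⟩ := ih
      -- (lin p ∪ semiLin L)* ≡ (lin p)* · (semiLin L)*
      have h1 : CKA ((semiLin (p :: L)).star)
          (((linExpr p.1 p.2).star).mul ((semiLin L).star)) := star_union _ _
      -- (lin p)* ≡ 1 ∪ exprVec p.1 · (exprVec p.1 ∪ unionVecs p.2)*
      have h2 := star_lin (exprVec p.1) (unionVecs p.2)
      -- ≡ semiLin [(0,∅),(p.1, insert p.1 p.2)]
      have h3 : CKA (CRE.one.union ((exprVec p.1).mul
            (((exprVec p.1).union (unionVecs p.2)).star)))
          (semiLin [((0 : α → ℕ), (∅ : Finset (α → ℕ))), (p.1, insert p.1 p.2)]) := by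
        have e2 : CKA ((exprVec p.1).mul (((exprVec p.1).union (unionVecs p.2)).star))
            ((linExpr p.1 (insert p.1 p.2)).union CRE.zero) :=
          ((ck_union_zero _).trans (CKA.mul_congr (CKA.refl _)
            (CKA.star_congr (unionVecs_insert p.1 p.2)))).symm
        exact CKA.union_congr linExpr_one.symm e2
      obtain ⟨L'', hL''⟩ :=
        mul_semiLin [((0 : α → ℕ), (∅ : Finset (α → ℕ))), (p.1, insert p.1 p.2)] L'
      exact ⟨L'', (h1.trans (CKA.mul_congr (h2.trans h3) hL')).trans hL''⟩

/-- Every commutative regular expression is provably equal to a semilinear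
expression, i.e. a finite union of linear expressions. -/
theorem decomp_semilinear (e : CRE α) :
    ∃ L : List ((α → ℕ) × Finset (α → ℕ)), CKA e (semiLin L) := by
  induction e with
  | zero => exact ⟨[], .refl _⟩
  | one => exact ⟨_, cka_one_semiLin⟩
  | letter a =>
      refine ⟨[(Pi.single a 1, (∅ : Finset (α → ℕ)))], ?_⟩
      refine (CKA.symm ?_)
      exact (ck_union_zero _).trans ((CKA.mul_congr (.refl _)
        ((CKA.star_congr unionVecs_empty).trans star_zero)).trans
          ((ck_mul_one _).trans (exprVec_single a)))
  | mul e f ihe ihf =>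
      obtain ⟨L1, h1⟩ := ihe
      obtain ⟨L2, h2⟩ := ihf
      obtain ⟨L, hL⟩ := mul_semiLin L1 L2
      exact ⟨L, (CKA.mul_congr h1 h2).trans hL⟩
  | union e f ihe ihf =>
      obtain ⟨L1, h1⟩ := ihe
      obtain ⟨L2, h2⟩ := ihf
      exact ⟨L1 ++ L2, (CKA.union_congr h1 h2).trans (semiLin_append L1 L2).symm⟩
  | star e ihe =>
      obtain ⟨L1, h1⟩ := ihe
      obtain ⟨L, hL⟩ := star_semiLin L1
      exact ⟨L, (CKA.star_congr h1).trans hL⟩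

end CKAnote
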